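/- Let S be a Polish space, μ a product probability measure on S^d, and B ⊆ {1,…,d} nonempty. For probability measures ν, θ on S^d with equal marginals ν^(B) = θ^(B), let ρ̃ be the probability measure on S^d × S^B defined as the semidirect product of the common marginal ν^(B) with the product of the conditional kernels of ν given coordinates in B and of θ given coordinates in B. Then H(ρ̃ | μ ⊗ μ^(B)) = H(ν^(B) | μ^(B)) + H(ν | ν^(B) ⊗ μ^(Bᶜ)) + H(θ | θ^(B) ⊗ μ^(Bᶜ)). -/

import Mathlib

open MeasureTheory ProbabilityTheory Real

-- Relative entropy (Kullback–Leibler divergence) with values in `EReal`.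
open scoped Classical in
noncomputable def KL {X : Type*} [MeasurableSpace X] (ν μ : Measure X) : EReal :=
  if ν ≪ μ ∧ Integrable (fun x => Real.log (ν.rnDeriv μ x).toReal) ν
  then ((∫ x, Real.log (ν.rnDeriv μ x).toReal ∂ν : ℝ) : EReal) else ⊤

/-- Marginal of a measure on `S^d` on the coordinates in `B`. -/
noncomputable def marg {S : Type*} [MeasurableSpace S] {d : ℕ}
    (ν : Measure (Fin d → S)) (B : Set (Fin d)) : Measure (B → S) :=
  ν.map (fun x (i : B) => x (i : Fin d))

/-- The identification `S^d ≅ S^B × S^{Bᶜ}`. -/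
def splitMap {S : Type*} {d : ℕ} (B : Set (Fin d)) :
    (Fin d → S) → ((B → S) × ((↥Bᶜ) → S)) :=
  fun x => (fun i => x (i : Fin d), fun i => x (i : Fin d))


open MeasureTheory ProbabilityTheory Real Set
open scoped ENNReal

section Aux
variable {α β γ : Type*} [MeasurableSpace α] [MeasurableSpace β] [MeasurableSpace γ]


lemma integrable_min_log_rnDeriv {X : Type*} [MeasurableSpace X] {ρ ξ : Measure X}
    [IsFiniteMeasure ρ] [IsFiniteMeasure ξ] (h : ρ ≪ ξ) :
    Integrable (fun x => min (Real.log (ρ.rnDeriv ξ x).toReal) 0) ρ := by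
  rw [← MeasureTheory.integrable_rnDeriv_smul_iff h]
  have hm : Measurable fun x => (ρ.rnDeriv ξ x).toReal :=
    (Measure.measurable_rnDeriv ρ ξ).ennreal_toReal
  refine Integrable.mono' (integrable_const 1) ?_ ?_
  · exact (hm.smul ((Real.measurable_log.comp hm).min measurable_const)).aestronglyMeasurable
  · refine Filter.Eventually.of_forall fun x => ?_
    set t := (ρ.rnDeriv ξ x).toReal with ht
    have ht0 : 0 ≤ t := ENNReal.toReal_nonneg
    have : ‖t • min (Real.log t) 0‖ = t * (- min (Real.log t) 0) := by
      rw [norm_smul, Real.norm_eq_abs, Real.norm_eq_abs, abs_of_nonneg ht0,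
        abs_of_nonpos (min_le_right _ _)]
    rw [this]
    rcases eq_or_lt_of_le ht0 with h0 | h0
    · simp [← h0]
    · have hlog : Real.log t ≤ t - 1 := Real.log_le_sub_one_of_pos h0
      have hinv : -Real.log t ≤ 1 / t - 1 := by
        rw [← Real.log_inv, one_div]
        exact (Real.log_le_sub_one_of_pos (by positivity)).trans (by simp)
      have : - min (Real.log t) 0 ≤ max (1 / t - 1) 0 := by
        rcases le_total (Real.log t) 0 with h' | h'
        · simp only [min_eq_left h']
          exact le_max_of_le_left hinv
        · simp [min_eq_right h']
      calc t * (- min (Real.log t) 0) ≤ t * max (1 / t - 1) 0 := by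
            exact mul_le_mul_of_nonneg_left this ht0
        _ ≤ 1 := by
            rcases le_total (1 / t - 1) 0 with h' | h'
            · rw [max_eq_right h', mul_zero]; exact zero_le_one
            · rw [max_eq_left h']
              have : t * (1 / t - 1) = 1 - t := by field_simp
              rw [this]; linarith

lemma integrable_add_iff_of_min {X : Type*} [MeasurableSpace X] {ρ : Measure X} {f g : X → ℝ}
    (hf : AEStronglyMeasurable f ρ) (hg : AEStronglyMeasurable g ρ)
    (hf' : Integrable (fun x => min (f x) 0) ρ) (hg' : Integrable (fun x => min (g x) 0) ρ) :
    Integrable (fun x => f x + g x) ρ ↔ Integrable f ρ ∧ Integrable g ρ := by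
  constructor
  · intro hfg
    have hmaxf : Integrable (fun x => max (f x) 0) ρ := by
      refine Integrable.mono' (hfg.abs.add hg'.abs) (hf.sup aestronglyMeasurable_const) ?_
      refine Filter.Eventually.of_forall fun x => ?_
      simp only [Real.norm_eq_abs, abs_of_nonneg (le_max_right (f x) 0)]
      rcases le_total (f x) 0 with h' | h'
      · simp only [max_eq_right h']
        exact add_nonneg (abs_nonneg _) (abs_nonneg _)
      · rw [max_eq_left h']
        have h1 : f x = (f x + g x) - g x := by ring
        have h2 : -g x ≤ |min (g x) 0| := by
          rw [abs_of_nonpos (min_le_right _ _)]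
          exact neg_le_neg (min_le_left _ _)
        calc f x = (f x + g x) + (- g x) := by ring
          _ ≤ |f x + g x| + |min (g x) 0| := add_le_add (le_abs_self _) h2
    have hfint : Integrable f ρ := by
      have := hmaxf.add hf'
      refine this.congr (Filter.Eventually.of_forall fun x => ?_)
      simp [max_add_min]
    refine ⟨hfint, (hfg.sub hfint).congr (Filter.Eventually.of_forall fun x => by simp)⟩
  · rintro ⟨h1, h2⟩; exact h1.add h2




lemma prod_withDensity' (μ : Measure α) (ν : Measure β) [SFinite μ] [SFinite ν]
    {f : α → ℝ≥0∞} {g : β → ℝ≥0∞} (hf : Measurable f) (hg : Measurable g) :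
    (μ.withDensity f).prod (ν.withDensity g)
      = (μ.prod ν).withDensity (fun z => f z.1 * g z.2) := by
  have hfg : Measurable fun z : α × β => f z.1 * g z.2 :=
    (hf.comp measurable_fst).mul (hg.comp measurable_snd)
  ext s hs
  rw [Measure.prod_apply hs, withDensity_apply _ hs, ← lintegral_indicator hs,
    MeasureTheory.lintegral_prod _ (hfg.indicator hs).aemeasurable,
    lintegral_withDensity_eq_lintegral_mul _ hf
      (measurable_measure_prodMk_left hs)]
  refine lintegral_congr fun x => ?_
  simp only [Pi.mul_apply]
  rw [withDensity_apply _ (measurable_prodMk_left hs),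
    ← lintegral_indicator (measurable_prodMk_left hs),
    ← lintegral_const_mul _ (hg.indicator (measurable_prodMk_left hs))]
  refine lintegral_congr fun y => ?_
  by_cases hxy : (x, y) ∈ s <;> simp [Set.indicator_apply, hxy]

lemma map_compProd_prod_fst (m : Measure α) [SFinite m] (κ : Kernel α β) (η : Kernel α γ)
    [IsSFiniteKernel κ] [IsMarkovKernel η] :
    (m ⊗ₘ (κ ×ₖ η)).map (fun z : α × β × γ => (z.1, z.2.1)) = m ⊗ₘ κ := by
  have hmeas : Measurable fun z : α × β × γ => (z.1, z.2.1) :=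
    measurable_fst.prodMk (measurable_fst.comp measurable_snd)
  ext s hs
  rw [Measure.map_apply hmeas hs, Measure.compProd_apply (hmeas hs), Measure.compProd_apply hs]
  refine lintegral_congr fun x => ?_
  have hpre : Prod.mk x ⁻¹' ((fun z : α × β × γ => (z.1, z.2.1)) ⁻¹' s)
      = (Prod.mk x ⁻¹' s) ×ˢ univ := by
    ext ⟨y, c⟩; simp [Set.mem_preimage]
  rw [hpre, Kernel.prod_apply, Measure.prod_prod]
  simp

lemma map_compProd_prod_snd (m : Measure α) [SFinite m] (κ : Kernel α β) (η : Kernel α γ)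
    [IsMarkovKernel κ] [IsSFiniteKernel η] :
    (m ⊗ₘ (κ ×ₖ η)).map (fun z : α × β × γ => (z.1, z.2.2)) = m ⊗ₘ η := by
  have hmeas : Measurable fun z : α × β × γ => (z.1, z.2.2) :=
    measurable_fst.prodMk (measurable_snd.comp measurable_snd)
  ext s hs
  rw [Measure.map_apply hmeas hs, Measure.compProd_apply (hmeas hs), Measure.compProd_apply hs]
  refine lintegral_congr fun x => ?_
  have hpre : Prod.mk x ⁻¹' ((fun z : α × β × γ => (z.1, z.2.2)) ⁻¹' s)
      = univ ×ˢ (Prod.mk x ⁻¹' s) := by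
    ext ⟨y, c⟩; simp [Set.mem_preimage]
  rw [hpre, Kernel.prod_apply, Measure.prod_prod]
  simp

lemma absCont_compProd_self {m ν' : Measure α} {p : Measure β}
    [IsFiniteMeasure m] [SFinite ν'] [SFinite p] (κ : Kernel α β) [IsMarkovKernel κ]
    (h : m ⊗ₘ κ ≪ ν'.prod p) : m ⊗ₘ κ ≪ m.prod p := by
  refine Measure.AbsolutelyContinuous.mk fun s hs hs0 => ?_
  rw [Measure.prod_apply hs] at hs0
  have hmeas : Measurable fun x => p (Prod.mk x ⁻¹' s) := measurable_measure_prodMk_left hs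
  have hN : ∀ᵐ x ∂m, p (Prod.mk x ⁻¹' s) = 0 := by
    rw [lintegral_eq_zero_iff hmeas] at hs0
    filter_upwards [hs0] with x hx using hx
  set N := {x | p (Prod.mk x ⁻¹' s) = 0} with hNdef
  have hNmeas : MeasurableSet N := hmeas (measurableSet_singleton 0)
  have hNc : m Nᶜ = 0 := by
    rw [hNdef, Set.compl_setOf]
    exact ae_iff.mp hN
  have h1 : (m ⊗ₘ κ) (s ∩ (N ×ˢ univ)) = 0 := by
    refine h ?_
    rw [Measure.prod_apply (hs.inter (hNmeas.prod MeasurableSet.univ))]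
    have : ∀ x, p (Prod.mk x ⁻¹' (s ∩ N ×ˢ univ)) = 0 := by
      intro x
      by_cases hx : x ∈ N
      · refine measure_mono_null (fun y hy => hy.1) hx
      · have : Prod.mk x ⁻¹' (s ∩ N ×ˢ univ) = ∅ := by
          ext y; simp [Set.mem_preimage, hx]
        simp [this]
    have h0 : ∀ x, p (Prod.mk x ⁻¹' s ∩ Prod.mk x ⁻¹' (N ×ˢ univ)) = 0 := fun x => by
      rw [← Set.preimage_inter]; exact this x
    simp [h0]
  have h2 : (m ⊗ₘ κ) (Nᶜ ×ˢ univ) = 0 := by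
    rw [Measure.compProd_apply_prod hNmeas.compl MeasurableSet.univ]
    have : ∀ x, κ x univ = 1 := fun x => measure_univ
    rw [setLIntegral_congr_fun hNmeas.compl (fun x _ => this x)]
    simp [hNc]
  refine measure_mono_null (fun z hz => ?_) (measure_union_null h1 h2)
  by_cases hz1 : z.1 ∈ N
  · exact Or.inl ⟨hz, ⟨hz1, trivial⟩⟩
  · exact Or.inr ⟨hz1, trivial⟩




lemma ae_kernel_eq_withDensity [MeasurableSpace.CountablyGenerated β]
    {m : Measure α} {p : Measure β} [IsFiniteMeasure m] [IsFiniteMeasure p] [SFinite m]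
    (κ : Kernel α β) [IsFiniteKernel κ] (h : m ⊗ₘ κ ≪ m.prod p) :
    ∀ᵐ x ∂m, κ x = p.withDensity (Kernel.rnDeriv κ (Kernel.const α p) x) := by
  set η := Kernel.const α p with hη
  have hMS := Kernel.measurableSet_mutuallySingularSet κ η
  have hprod : (m.prod p) (Kernel.mutuallySingularSet κ η) = 0 := by
    rw [Measure.prod_apply hMS]
    have : ∀ x, p (Prod.mk x ⁻¹' Kernel.mutuallySingularSet κ η) = 0 := fun x => by
      have h1 := Kernel.measure_mutuallySingularSetSlice κ η x
      rw [hη, Kernel.const_apply] at h1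
      exact h1
    simp [this]
  have hcomp : (m ⊗ₘ κ) (Kernel.mutuallySingularSet κ η) = 0 := h hprod
  rw [Measure.compProd_apply hMS, lintegral_eq_zero_iff
    (Kernel.measurable_kernel_prodMk_left hMS)] at hcomp
  filter_upwards [hcomp] with x hx
  have hslice : κ x (Kernel.mutuallySingularSetSlice κ η x) = 0 := hx
  -- singular part vanishes at x
  have hdecomp := Kernel.rnDeriv_add_singularPart κ η
  have hxdecomp : κ x = Kernel.withDensity η (Kernel.rnDeriv κ η) x + Kernel.singularPart κ η x := by
    conv_lhs => rw [← hdecomp]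
    rfl
  have hsp : Kernel.singularPart κ η x = 0 := by
    rw [Kernel.singularPart_eq_zero_iff_apply_eq_zero]
    have hle : Kernel.singularPart κ η x (Kernel.mutuallySingularSetSlice κ η x)
        ≤ κ x (Kernel.mutuallySingularSetSlice κ η x) := by
      conv_rhs => rw [hxdecomp]
      simp [Measure.add_apply]
    exact le_antisymm (hle.trans hslice.le) zero_le
  rw [hxdecomp, hsp, add_zero, Kernel.withDensity_apply _ (Kernel.measurable_rnDeriv κ η), hη,
    Kernel.const_apply]


lemma compProd_eq_withDensity [MeasurableSpace.CountablyGenerated β]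
    {m : Measure α} {p : Measure β} [IsFiniteMeasure m] [IsFiniteMeasure p]
    (κ : Kernel α β) [IsMarkovKernel κ] (h : m ⊗ₘ κ ≪ m.prod p) :
    m ⊗ₘ κ = (m.prod p).withDensity
      (fun z => Kernel.rnDeriv κ (Kernel.const α p) z.1 z.2) := by
  have hmeas := Kernel.measurable_rnDeriv κ (Kernel.const α p)
  ext s hs
  rw [Measure.compProd_apply hs, withDensity_apply _ hs, ← lintegral_indicator hs,
    MeasureTheory.lintegral_prod _ ((hmeas.indicator hs).aemeasurable)]
  refine lintegral_congr_ae ?_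
  filter_upwards [ae_kernel_eq_withDensity κ h] with x hx
  rw [hx, withDensity_apply _ (measurable_prodMk_left hs),
    ← lintegral_indicator (measurable_prodMk_left hs)]
  rfl

lemma compProd_prod_eq_withDensity
    [MeasurableSpace.CountablyGenerated β] [MeasurableSpace.CountablyGenerated γ]
    {m : Measure α} {p : Measure β} {q : Measure γ}
    [IsFiniteMeasure m] [IsFiniteMeasure p] [IsFiniteMeasure q]
    (κ : Kernel α β) (η : Kernel α γ) [IsMarkovKernel κ] [IsMarkovKernel η]
    (hκ : m ⊗ₘ κ ≪ m.prod p) (hη : m ⊗ₘ η ≪ m.prod q) :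
    m ⊗ₘ (κ ×ₖ η) = (m.prod (p.prod q)).withDensity
      (fun z => Kernel.rnDeriv κ (Kernel.const α p) z.1 z.2.1
        * Kernel.rnDeriv η (Kernel.const α q) z.1 z.2.2) := by
  have hmeasκ := Kernel.measurable_rnDeriv κ (Kernel.const α p)
  have hmeasη := Kernel.measurable_rnDeriv η (Kernel.const α q)
  have hD : Measurable fun z : α × β × γ => Kernel.rnDeriv κ (Kernel.const α p) z.1 z.2.1
      * Kernel.rnDeriv η (Kernel.const α q) z.1 z.2.2 := by
    exact (hmeasκ.comp (measurable_fst.prodMk (measurable_fst.comp measurable_snd))).mul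
      (hmeasη.comp (measurable_fst.prodMk (measurable_snd.comp measurable_snd)))
  ext s hs
  rw [Measure.compProd_apply hs, withDensity_apply _ hs, ← lintegral_indicator hs,
    MeasureTheory.lintegral_prod _ ((hD.indicator hs).aemeasurable)]
  refine lintegral_congr_ae ?_
  filter_upwards [ae_kernel_eq_withDensity κ hκ, ae_kernel_eq_withDensity η hη] with x hxκ hxη
  rw [Kernel.prod_apply, hxκ, hxη,
    prod_withDensity' p q (Kernel.measurable_rnDeriv_right κ _ x)
      (Kernel.measurable_rnDeriv_right η _ x),
    withDensity_apply _ (measurable_prodMk_left hs),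
    ← lintegral_indicator (measurable_prodMk_left hs)]
  rfl


lemma KL_ne_bot {X : Type*} [MeasurableSpace X] (ν μ : Measure X) : KL ν μ ≠ ⊥ := by
  unfold KL
  split_ifs
  · exact EReal.coe_ne_bot _
  · exact ne_of_gt bot_lt_top

lemma KL_of_not_ac {X : Type*} [MeasurableSpace X] {ν μ : Measure X} (h : ¬ ν ≪ μ) :
    KL ν μ = ⊤ := by
  unfold KL
  rw [if_neg (fun hc => h hc.1)]

lemma KL_of_not_int {X : Type*} [MeasurableSpace X] {ν μ : Measure X}
    (h : ¬ Integrable (fun x => Real.log (ν.rnDeriv μ x).toReal) ν) :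
    KL ν μ = ⊤ := by
  unfold KL
  rw [if_neg (fun hc => h hc.2)]

lemma KL_of_ac_int {X : Type*} [MeasurableSpace X] {ν μ : Measure X} (hac : ν ≪ μ)
    (h : Integrable (fun x => Real.log (ν.rnDeriv μ x).toReal) ν) :
    KL ν μ = ((∫ x, Real.log (ν.rnDeriv μ x).toReal ∂ν : ℝ) : EReal) := by
  unfold KL
  rw [if_pos ⟨hac, h⟩]

theorem KL_compProd_prod
    [MeasurableSpace.CountablyGenerated β] [MeasurableSpace.CountablyGenerated γ]
    (m μ1 : Measure α) (p : Measure β) (q : Measure γ)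
    [IsProbabilityMeasure m] [IsProbabilityMeasure μ1] [IsProbabilityMeasure p]
    [IsProbabilityMeasure q]
    (κ : Kernel α β) (η : Kernel α γ) [IsMarkovKernel κ] [IsMarkovKernel η] :
    KL (m ⊗ₘ (κ ×ₖ η)) (μ1.prod (p.prod q))
      = KL m μ1 + KL (m ⊗ₘ κ) (m.prod p) + KL (m ⊗ₘ η) (m.prod q) := by
  set ρ := m ⊗ₘ (κ ×ₖ η) with hρdef
  set R := μ1.prod (p.prod q) with hRdef
  have hmap1 : ρ.map Prod.fst = m := Measure.fst_compProd m (κ ×ₖ η)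
  have hmap2 : ρ.map (fun z : α × β × γ => (z.1, z.2.1)) = m ⊗ₘ κ :=
    map_compProd_prod_fst m κ η
  have hmap3 : ρ.map (fun z : α × β × γ => (z.1, z.2.2)) = m ⊗ₘ η :=
    map_compProd_prod_snd m κ η
  have hπ12 : Measurable fun z : α × β × γ => (z.1, z.2.1) :=
    measurable_fst.prodMk (measurable_fst.comp measurable_snd)
  have hπ13 : Measurable fun z : α × β × γ => (z.1, z.2.2) :=
    measurable_fst.prodMk (measurable_snd.comp measurable_snd)
  have hRmap1 : R.map Prod.fst = μ1 := Measure.fst_prod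
  have hRmap2 : R.map (fun z : α × β × γ => (z.1, z.2.1)) = μ1.prod p := by
    have he : (fun z : α × β × γ => (z.1, z.2.1)) = Prod.map id Prod.fst := rfl
    rw [he, ← Measure.map_prod_map _ _ measurable_id measurable_fst, Measure.map_id]
    congr 1
    exact Measure.fst_prod
  have hRmap3 : R.map (fun z : α × β × γ => (z.1, z.2.2)) = μ1.prod q := by
    have he : (fun z : α × β × γ => (z.1, z.2.2)) = Prod.map id Prod.snd := rfl
    rw [he, ← Measure.map_prod_map _ _ measurable_id measurable_snd, Measure.map_id]
    congr 1
    exact Measure.snd_prod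
  by_cases h1 : m ≪ μ1
  swap
  · have hLHS : ¬ ρ ≪ R := by
      intro h
      refine h1 ?_
      have := h.map measurable_fst
      rwa [hmap1, hRmap1] at this
    rw [KL_of_not_ac hLHS, KL_of_not_ac h1, EReal.top_add_of_ne_bot (KL_ne_bot _ _),
      EReal.top_add_of_ne_bot (KL_ne_bot _ _)]
  by_cases h2 : m ⊗ₘ κ ≪ m.prod p
  swap
  · have hLHS : ¬ ρ ≪ R := by
      intro h
      refine h2 (absCont_compProd_self κ (ν' := μ1) ?_)
      have := h.map hπ12
      rwa [hmap2, hRmap2] at this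
    rw [KL_of_not_ac hLHS, KL_of_not_ac h2, EReal.add_top_of_ne_bot (KL_ne_bot _ _),
      EReal.top_add_of_ne_bot (KL_ne_bot _ _)]
  by_cases h3 : m ⊗ₘ η ≪ m.prod q
  swap
  · have hLHS : ¬ ρ ≪ R := by
      intro h
      refine h3 (absCont_compProd_self η (ν' := μ1) ?_)
      have := h.map hπ13
      rwa [hmap3, hRmap3] at this
    rw [KL_of_not_ac hLHS, KL_of_not_ac h3]
    have hne : KL m μ1 + KL (m ⊗ₘ κ) (m.prod p) ≠ ⊥ := by
      intro hc
      rcases EReal.add_eq_bot_iff.mp hc with h | h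
      · exact KL_ne_bot _ _ h
      · exact KL_ne_bot _ _ h
    rw [EReal.add_top_of_ne_bot hne]
  -- main case
  set f := m.rnDeriv μ1 with hfdef
  set gk := Kernel.rnDeriv κ (Kernel.const α p) with hgkdef
  set hk := Kernel.rnDeriv η (Kernel.const α q) with hhkdef
  have hfm : Measurable f := Measure.measurable_rnDeriv m μ1
  have hgkm : Measurable fun w : α × β => gk w.1 w.2 := Kernel.measurable_rnDeriv κ _
  have hhkm : Measurable fun w : α × γ => hk w.1 w.2 := Kernel.measurable_rnDeriv η _
  set W := fun z : α × β × γ => f z.1 * (gk z.1 z.2.1 * hk z.1 z.2.2) with hWdef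
  have hWm : Measurable W := (hfm.comp measurable_fst).mul
    ((hgkm.comp hπ12).mul (hhkm.comp hπ13))
  have hrep3 : ρ = (m.prod (p.prod q)).withDensity
      (fun z => gk z.1 z.2.1 * hk z.1 z.2.2) :=
    compProd_prod_eq_withDensity κ η h2 h3
  have hprodwd : m.prod (p.prod q) = R.withDensity (fun z => f z.1) := by
    conv_lhs => rw [← Measure.withDensity_rnDeriv_eq m μ1 h1, ← withDensity_one (μ := p.prod q)]
    rw [prod_withDensity' μ1 (p.prod q) hfm measurable_one]
    simp [hRdef]
  have hf1 : Measurable fun z : α × β × γ => f z.1 := hfm.comp measurable_fst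
  have hgh1 : Measurable fun z : α × β × γ => gk z.1 z.2.1 * hk z.1 z.2.2 :=
    (hgkm.comp hπ12).mul (hhkm.comp hπ13)
  have hrepF : ρ = R.withDensity W := by
    rw [hrep3, hprodwd, ← withDensity_mul _ hf1 hgh1]
    rfl
  have hac : ρ ≪ R := by
    rw [hrepF]; exact withDensity_absolutelyContinuous R W
  have hrnW : ρ.rnDeriv R =ᵐ[ρ] W := by
    have : ρ.rnDeriv R =ᵐ[R] W := by
      conv_lhs => rw [hrepF]
      exact Measure.rnDeriv_withDensity R hWm
    exact this.filter_mono hac.ae_le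
  have hrep1 : m ⊗ₘ κ = (m.prod p).withDensity (fun w => gk w.1 w.2) :=
    compProd_eq_withDensity κ h2
  have hrep2 : m ⊗ₘ η = (m.prod q).withDensity (fun w => hk w.1 w.2) :=
    compProd_eq_withDensity η h3
  have hrnG : (m ⊗ₘ κ).rnDeriv (m.prod p) =ᵐ[m ⊗ₘ κ] (fun w => gk w.1 w.2) := by
    have : (m ⊗ₘ κ).rnDeriv (m.prod p) =ᵐ[m.prod p] (fun w => gk w.1 w.2) := by
      conv_lhs => rw [hrep1]
      exact Measure.rnDeriv_withDensity _ hgkm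
    exact this.filter_mono h2.ae_le
  have hrnH : (m ⊗ₘ η).rnDeriv (m.prod q) =ᵐ[m ⊗ₘ η] (fun w => hk w.1 w.2) := by
    have : (m ⊗ₘ η).rnDeriv (m.prod q) =ᵐ[m ⊗ₘ η] (fun w => hk w.1 w.2) := by
      have : (m ⊗ₘ η).rnDeriv (m.prod q) =ᵐ[m.prod q] (fun w => hk w.1 w.2) := by
        conv_lhs => rw [hrep2]
        exact Measure.rnDeriv_withDensity _ hhkm
      exact this.filter_mono h3.ae_le
    exact this
  -- positivity and finiteness
  have hfm' : ∀ᵐ x ∂m, 0 < f x ∧ f x < ⊤ := by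
    filter_upwards [Measure.rnDeriv_pos h1,
      (Measure.rnDeriv_lt_top m μ1).filter_mono h1.ae_le] with x h h' using ⟨h, h'⟩
  have hG' : ∀ᵐ w ∂(m ⊗ₘ κ), 0 < gk w.1 w.2 ∧ gk w.1 w.2 < ⊤ := by
    filter_upwards [Measure.rnDeriv_pos h2,
      (Measure.rnDeriv_lt_top (m ⊗ₘ κ) (m.prod p)).filter_mono h2.ae_le, hrnG]
      with w h h' he
    rw [← he]
    exact ⟨h, h'⟩
  have hH' : ∀ᵐ w ∂(m ⊗ₘ η), 0 < hk w.1 w.2 ∧ hk w.1 w.2 < ⊤ := by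
    filter_upwards [Measure.rnDeriv_pos h3,
      (Measure.rnDeriv_lt_top (m ⊗ₘ η) (m.prod q)).filter_mono h3.ae_le, hrnH]
      with w h h' he
    rw [← he]
    exact ⟨h, h'⟩
  have hfρ : ∀ᵐ z ∂ρ, 0 < f z.1 ∧ f z.1 < ⊤ := by
    rw [← hmap1] at hfm'
    exact ae_of_ae_map measurable_fst.aemeasurable hfm'
  have hGρ : ∀ᵐ z ∂ρ, 0 < gk z.1 z.2.1 ∧ gk z.1 z.2.1 < ⊤ := by
    rw [← hmap2] at hG'
    exact ae_of_ae_map hπ12.aemeasurable hG'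
  have hHρ : ∀ᵐ z ∂ρ, 0 < hk z.1 z.2.2 ∧ hk z.1 z.2.2 < ⊤ := by
    rw [← hmap3] at hH'
    exact ae_of_ae_map hπ13.aemeasurable hH'
  -- log decomposition
  set F1 := fun z : α × β × γ => Real.log (f z.1).toReal with hF1def
  set F2 := fun z : α × β × γ => Real.log (gk z.1 z.2.1).toReal with hF2def
  set F3 := fun z : α × β × γ => Real.log (hk z.1 z.2.2).toReal with hF3def
  have hF1m : Measurable F1 := Real.measurable_log.comp (hfm.comp measurable_fst).ennreal_toReal
  have hF2m : Measurable F2 := Real.measurable_log.comp (hgkm.comp hπ12).ennreal_toReal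
  have hF3m : Measurable F3 := Real.measurable_log.comp (hhkm.comp hπ13).ennreal_toReal
  have hlog : (fun z => Real.log (ρ.rnDeriv R z).toReal)
      =ᵐ[ρ] fun z => F1 z + F2 z + F3 z := by
    filter_upwards [hrnW, hfρ, hGρ, hHρ] with z hW hf hg hh
    rw [hW, hWdef]
    simp only
    rw [ENNReal.toReal_mul, ENNReal.toReal_mul, Real.log_mul, Real.log_mul, ← add_assoc]
    · exact (ENNReal.toReal_pos hg.1.ne' hg.2.ne).ne'
    · exact (ENNReal.toReal_pos hh.1.ne' hh.2.ne).ne'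
    · exact (ENNReal.toReal_pos hf.1.ne' hf.2.ne).ne'
    · exact (mul_pos (ENNReal.toReal_pos hg.1.ne' hg.2.ne)
        (ENNReal.toReal_pos hh.1.ne' hh.2.ne)).ne'
  -- integrability transfers
  have hiff1 : Integrable F1 ρ ↔ Integrable (fun x => Real.log (f x).toReal) m := by
    have h := integrable_map_measure (μ := ρ) (f := Prod.fst)
      (g := fun x => Real.log (f x).toReal)
      (Real.measurable_log.comp hfm.ennreal_toReal).aestronglyMeasurable
      measurable_fst.aemeasurable
    rw [hmap1] at h
    exact h.symm
  have hG0 : (fun w : α × β => Real.log ((m ⊗ₘ κ).rnDeriv (m.prod p) w).toReal)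
      =ᵐ[m ⊗ₘ κ] fun w => Real.log (gk w.1 w.2).toReal := by
    filter_upwards [hrnG] with w hw using by rw [hw]
  have hH0 : (fun w : α × γ => Real.log ((m ⊗ₘ η).rnDeriv (m.prod q) w).toReal)
      =ᵐ[m ⊗ₘ η] fun w => Real.log (hk w.1 w.2).toReal := by
    filter_upwards [hrnH] with w hw using by rw [hw]
  have hiff2 : Integrable F2 ρ ↔
      Integrable (fun w => Real.log ((m ⊗ₘ κ).rnDeriv (m.prod p) w).toReal) (m ⊗ₘ κ) := by
    rw [integrable_congr hG0]
    have h := integrable_map_measure (μ := ρ) (f := fun z : α × β × γ => (z.1, z.2.1))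
      (g := fun w : α × β => Real.log (gk w.1 w.2).toReal)
      (Real.measurable_log.comp hgkm.ennreal_toReal).aestronglyMeasurable
      hπ12.aemeasurable
    rw [hmap2] at h
    exact h.symm
  have hiff3 : Integrable F3 ρ ↔
      Integrable (fun w => Real.log ((m ⊗ₘ η).rnDeriv (m.prod q) w).toReal) (m ⊗ₘ η) := by
    rw [integrable_congr hH0]
    have h := integrable_map_measure (μ := ρ) (f := fun z : α × β × γ => (z.1, z.2.2))
      (g := fun w : α × γ => Real.log (hk w.1 w.2).toReal)
      (Real.measurable_log.comp hhkm.ennreal_toReal).aestronglyMeasurable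
      hπ13.aemeasurable
    rw [hmap3] at h
    exact h.symm
  -- negative parts
  have hN1 : Integrable (fun z => min (F1 z) 0) ρ := by
    have h : Integrable (fun x => min (Real.log (f x).toReal) 0) m :=
      integrable_min_log_rnDeriv h1
    have h2' := integrable_map_measure (μ := ρ) (f := Prod.fst)
      (g := fun x => min (Real.log (f x).toReal) 0)
      ((Real.measurable_log.comp hfm.ennreal_toReal).min measurable_const).aestronglyMeasurable
      measurable_fst.aemeasurable
    rw [hmap1] at h2'
    exact h2'.mp h
  have hN2 : Integrable (fun z => min (F2 z) 0) ρ := by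
    have h := integrable_min_log_rnDeriv h2
    have h' : Integrable (fun w : α × β => min (Real.log (gk w.1 w.2).toReal) 0) (m ⊗ₘ κ) := by
      refine h.congr ?_
      filter_upwards [hrnG] with w hw using by rw [hw]
    have h2' := integrable_map_measure (μ := ρ) (f := fun z : α × β × γ => (z.1, z.2.1))
      (g := fun w : α × β => min (Real.log (gk w.1 w.2).toReal) 0)
      (((Real.measurable_log.comp hgkm.ennreal_toReal).min
        measurable_const).aestronglyMeasurable)
      hπ12.aemeasurable
    rw [hmap2] at h2'
    exact h2'.mp h'
  have hN3 : Integrable (fun z => min (F3 z) 0) ρ := by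
    have h := integrable_min_log_rnDeriv h3
    have h' : Integrable (fun w : α × γ => min (Real.log (hk w.1 w.2).toReal) 0) (m ⊗ₘ η) := by
      refine h.congr ?_
      filter_upwards [hrnH] with w hw using by rw [hw]
    have h2' := integrable_map_measure (μ := ρ) (f := fun z : α × β × γ => (z.1, z.2.2))
      (g := fun w : α × γ => min (Real.log (hk w.1 w.2).toReal) 0)
      (((Real.measurable_log.comp hhkm.ennreal_toReal).min
        measurable_const).aestronglyMeasurable)
      hπ13.aemeasurable
    rw [hmap3] at h2'
    exact h2'.mp h'
  have hN12 : Integrable (fun z => min (F1 z + F2 z) 0) ρ := by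
    refine Integrable.mono' (hN1.abs.add hN2.abs)
      (((hF1m.add hF2m).min measurable_const).aestronglyMeasurable) ?_
    refine Filter.Eventually.of_forall fun z => ?_
    rw [Real.norm_eq_abs, abs_of_nonpos (min_le_right _ _)]
    have h1' : min (F1 z) 0 + min (F2 z) 0 ≤ min (F1 z + F2 z) 0 :=
      le_min (add_le_add (min_le_left _ _) (min_le_left _ _))
        (add_nonpos (min_le_right _ _) (min_le_right _ _))
    calc -(min (F1 z + F2 z) 0) ≤ -(min (F1 z) 0 + min (F2 z) 0) := neg_le_neg h1'
      _ = |min (F1 z) 0| + |min (F2 z) 0| := by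
          rw [neg_add, abs_of_nonpos (min_le_right _ _), abs_of_nonpos (min_le_right _ _)]
  have hsum_iff : Integrable (fun z => Real.log (ρ.rnDeriv R z).toReal) ρ
      ↔ (Integrable F1 ρ ∧ Integrable F2 ρ ∧ Integrable F3 ρ) := by
    rw [integrable_congr hlog]
    have A := integrable_add_iff_of_min (ρ := ρ) (f := fun z => F1 z + F2 z) (g := F3)
      ((hF1m.add hF2m).aestronglyMeasurable) hF3m.aestronglyMeasurable hN12 hN3
    have B := integrable_add_iff_of_min (ρ := ρ) (f := F1) (g := F2)
      hF1m.aestronglyMeasurable hF2m.aestronglyMeasurable hN1 hN2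
    constructor
    · intro h
      obtain ⟨h12, hi3⟩ := A.mp h
      obtain ⟨hi1, hi2⟩ := B.mp h12
      exact ⟨hi1, hi2, hi3⟩
    · rintro ⟨i1, i2, i3⟩
      exact A.mpr ⟨B.mpr ⟨i1, i2⟩, i3⟩
  by_cases hI1 : Integrable (fun x => Real.log (m.rnDeriv μ1 x).toReal) m
  swap
  · have hLHS : ¬ Integrable (fun z => Real.log (ρ.rnDeriv R z).toReal) ρ := by
      intro h
      exact hI1 (hiff1.mp (hsum_iff.mp h).1)
    rw [KL_of_not_int hLHS, KL_of_not_int hI1, EReal.top_add_of_ne_bot (KL_ne_bot _ _),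
      EReal.top_add_of_ne_bot (KL_ne_bot _ _)]
  by_cases hI2 : Integrable
      (fun w => Real.log ((m ⊗ₘ κ).rnDeriv (m.prod p) w).toReal) (m ⊗ₘ κ)
  swap
  · have hLHS : ¬ Integrable (fun z => Real.log (ρ.rnDeriv R z).toReal) ρ := by
      intro h
      exact hI2 (hiff2.mp (hsum_iff.mp h).2.1)
    rw [KL_of_not_int hLHS, KL_of_not_int hI2, EReal.add_top_of_ne_bot (KL_ne_bot _ _),
      EReal.top_add_of_ne_bot (KL_ne_bot _ _)]
  by_cases hI3 : Integrable
      (fun w => Real.log ((m ⊗ₘ η).rnDeriv (m.prod q) w).toReal) (m ⊗ₘ η)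
  swap
  · have hLHS : ¬ Integrable (fun z => Real.log (ρ.rnDeriv R z).toReal) ρ := by
      intro h
      exact hI3 (hiff3.mp (hsum_iff.mp h).2.2)
    rw [KL_of_not_int hLHS, KL_of_not_int hI3]
    have hne : KL m μ1 + KL (m ⊗ₘ κ) (m.prod p) ≠ ⊥ := by
      intro hc
      rcases EReal.add_eq_bot_iff.mp hc with h | h
      · exact KL_ne_bot _ _ h
      · exact KL_ne_bot _ _ h
    rw [EReal.add_top_of_ne_bot hne]
  have hIF1 : Integrable F1 ρ := hiff1.mpr hI1
  have hIF2 : Integrable F2 ρ := hiff2.mpr hI2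
  have hIF3 : Integrable F3 ρ := hiff3.mpr hI3
  have hIsum := hsum_iff.mpr ⟨hIF1, hIF2, hIF3⟩
  rw [KL_of_ac_int hac hIsum, KL_of_ac_int h1 hI1, KL_of_ac_int h2 hI2, KL_of_ac_int h3 hI3,
    ← EReal.coe_add, ← EReal.coe_add]
  norm_cast
  rw [integral_congr_ae hlog]
  have hIF12 : Integrable (fun z => F1 z + F2 z) ρ := hIF1.add hIF2
  have hadd : ∫ z, (F1 z + F2 z + F3 z) ∂ρ
      = ∫ z, F1 z ∂ρ + ∫ z, F2 z ∂ρ + ∫ z, F3 z ∂ρ := by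
    rw [integral_add hIF12 hIF3, integral_add hIF1 hIF2]
  rw [hadd]
  have hv1 : ∫ z, F1 z ∂ρ = ∫ x, Real.log (m.rnDeriv μ1 x).toReal ∂m := by
    have h := integral_map (μ := ρ) (φ := Prod.fst)
      (f := fun x => Real.log (f x).toReal) measurable_fst.aemeasurable
      (Real.measurable_log.comp hfm.ennreal_toReal).aestronglyMeasurable
    rw [hmap1] at h
    exact h.symm
  have hv2 : ∫ z, F2 z ∂ρ
      = ∫ w, Real.log ((m ⊗ₘ κ).rnDeriv (m.prod p) w).toReal ∂(m ⊗ₘ κ) := by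
    rw [integral_congr_ae hG0]
    have h := integral_map (μ := ρ) (φ := fun z : α × β × γ => (z.1, z.2.1))
      (f := fun w : α × β => Real.log (gk w.1 w.2).toReal) hπ12.aemeasurable
      (Real.measurable_log.comp hgkm.ennreal_toReal).aestronglyMeasurable
    rw [hmap2] at h
    exact h.symm
  have hv3 : ∫ z, F3 z ∂ρ
      = ∫ w, Real.log ((m ⊗ₘ η).rnDeriv (m.prod q) w).toReal ∂(m ⊗ₘ η) := by
    rw [integral_congr_ae hH0]
    have h := integral_map (μ := ρ) (φ := fun z : α × β × γ => (z.1, z.2.2))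
      (f := fun w : α × γ => Real.log (hk w.1 w.2).toReal) hπ13.aemeasurable
      (Real.measurable_log.comp hhkm.ennreal_toReal).aestronglyMeasurable
    rw [hmap3] at h
    exact h.symm
  rw [hv1, hv2, hv3]

end Aux

open ProbabilityTheory.Kernel in
/-- The semidirect product of the common marginal on `B` with the product of the
conditional kernels of `ν` and `θ` given the coordinates in `B` has relative entropy
`H(ν^(B)|μ^(B)) + H(ν | ν^(B) ⊗ μ^(Bᶜ)) + H(θ | θ^(B) ⊗ μ^(Bᶜ))` with respect to the
corresponding product reference measure built from the product measure `μ`. -/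
theorem relativeEntropy_semidirect_product
    {S : Type*} [MeasurableSpace S] [TopologicalSpace S] [PolishSpace S] [BorelSpace S]
    {d : ℕ} (μs : Fin d → Measure S) [∀ i, IsProbabilityMeasure (μs i)]
    (ν θ : Measure (Fin d → S)) [IsProbabilityMeasure ν] [IsProbabilityMeasure θ]
    (B : Set (Fin d)) (hB : B.Nonempty)
    (hmarg : marg ν B = marg θ B)
    (κν κθ : Kernel (B → S) ((↥Bᶜ) → S)) [IsMarkovKernel κν] [IsMarkovKernel κθ]
    [SFinite (marg ν B)]
    (hκν : (marg ν B).compProd κν = ν.map (splitMap B))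
    (hκθ : (marg θ B).compProd κθ = θ.map (splitMap B)) :
    KL ((marg ν B).compProd (κν ×ₖ κθ))
        ((marg (Measure.pi μs) B).prod
          ((marg (Measure.pi μs) Bᶜ).prod (marg (Measure.pi μs) Bᶜ)))
      = KL (marg ν B) (marg (Measure.pi μs) B)
        + KL (ν.map (splitMap B)) ((marg ν B).prod (marg (Measure.pi μs) Bᶜ))
        + KL (θ.map (splitMap B)) ((marg θ B).prod (marg (Measure.pi μs) Bᶜ)) := by
  classical
  have hmB : Measurable fun (x : Fin d → S) (i : B) => x (i : Fin d) :=
    measurable_pi_lambda _ fun i => measurable_pi_apply _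
  have hmBc : Measurable fun (x : Fin d → S) (i : (↥Bᶜ)) => x (i : Fin d) :=
    measurable_pi_lambda _ fun i => measurable_pi_apply _
  haveI h1 : IsProbabilityMeasure (marg ν B) :=
    Measure.isProbabilityMeasure_map hmB.aemeasurable
  haveI h2 : IsProbabilityMeasure (marg (Measure.pi μs) B) :=
    Measure.isProbabilityMeasure_map hmB.aemeasurable
  haveI h3 : IsProbabilityMeasure (marg (Measure.pi μs) Bᶜ) :=
    Measure.isProbabilityMeasure_map hmBc.aemeasurable
  rw [← hκν, ← hκθ, ← hmarg]
  exact KL_compProd_prod (marg ν B) (marg (Measure.pi μs) B)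
    (marg (Measure.pi μs) Bᶜ) (marg (Measure.pi μs) Bᶜ) κν κθ
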